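/- Let a, b, c ∈ ℝ³ be such that (b − a) × (c − a) ≠ 0, and let v = α(b − a) + β(c − a) be any vector in the plane of the triangle (α, β ∈ ℝ). Define the unit normal of the perturbed triangle by n(t) = w(t)/‖w(t)‖ where w(t) = (b − (a + t v)) × (c − (a + t v)). Then n is differentiable at t = 0 and its derivative at t = 0 is the zero vector; i.e., the unit normal of a triangle is invariant to first order under in-plane displacement of a vertex. -/

import Mathlib

open Matrix

/-- The unit normal of a triangle is invariant to first order under in-plane
displacement of a vertex: if `(b − a) × (c − a) ≠ 0` and `v = α(b − a) + β(c − a)`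
is any vector in the plane of the triangle, then the unit normal
`n(t) = w(t)/‖w(t)‖` of the perturbed triangle, where
`w(t) = (b − (a + t v)) × (c − (a + t v))`, is differentiable at `t = 0` with
derivative zero. -/
theorem unit_normal_first_order_invariant (a b c v : Fin 3 → ℝ) (α β : ℝ)
    (hv : v = α • (b - a) + β • (c - a))
    (hw : (b - a) ⨯₃ (c - a) ≠ 0) :
    HasDerivAt
      (fun t : ℝ =>
        (Real.sqrt (((b - (a + t • v)) ⨯₃ (c - (a + t • v))) ⬝ᵥ
            ((b - (a + t • v)) ⨯₃ (c - (a + t • v)))))⁻¹ •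
          ((b - (a + t • v)) ⨯₃ (c - (a + t • v))))
      (0 : Fin 3 → ℝ) 0 := by
  set u := b - a with hu
  set s := c - a with hs
  set w0 := u ⨯₃ s with hw0
  -- Step 1: the cross product scales linearly in t
  have key : ∀ t : ℝ, (b - (a + t • v)) ⨯₃ (c - (a + t • v))
      = (1 - t * (α + β)) • w0 := by
    intro t
    have h1 : b - (a + t • v) = u - t • v := by rw [hu]; abel
    have h2 : c - (a + t • v) = s - t • v := by rw [hs]; abel
    rw [h1, h2, hv, hw0, cross_apply, cross_apply]
    ext i
    fin_cases i <;>
      simp [Pi.sub_apply, Pi.add_apply, Pi.smul_apply, smul_eq_mul] <;> ring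
  -- Step 2: eventually equal to a constant
  set d := w0 ⬝ᵥ w0 with hd
  have hdpos : 0 < d := by
    rw [hd]
    have h0 : d ≠ 0 := fun h => hw ((dotProduct_self_eq_zero).mp (hd ▸ h))
    have h1 : 0 ≤ d := Finset.sum_nonneg fun i _ => mul_self_nonneg _
    exact h1.lt_of_ne (Ne.symm h0)
  set C : ℝ := α + β with hC
  have heq : (fun t : ℝ =>
      (Real.sqrt (((b - (a + t • v)) ⨯₃ (c - (a + t • v))) ⬝ᵥ
          ((b - (a + t • v)) ⨯₃ (c - (a + t • v)))))⁻¹ •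
        ((b - (a + t • v)) ⨯₃ (c - (a + t • v))))
      =ᶠ[nhds (0 : ℝ)] (fun _ => (Real.sqrt d)⁻¹ • w0) := by
    have : ∀ᶠ t : ℝ in nhds 0, 0 < 1 - t * C := by
      have hcont : Continuous fun t : ℝ => 1 - t * C := continuous_const.sub (continuous_id.mul continuous_const)
      have := hcont.tendsto 0
      simp only [zero_mul, sub_zero] at this
      exact this.eventually_const_lt (by norm_num : (0:ℝ) < 1)
    filter_upwards [this] with t ht
    have hc := key t
    rw [hc]
    have hdot : ((1 - t * C) • w0) ⬝ᵥ ((1 - t * C) • w0) = (1 - t * C)^2 * d := by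
      simp only [smul_dotProduct, dotProduct_smul, smul_eq_mul, ← hd]; ring
    rw [hdot, Real.sqrt_mul (sq_nonneg _), Real.sqrt_sq_eq_abs,
      abs_of_pos ht, smul_smul]
    congr 1
    rw [mul_inv]
    field_simp
  exact (hasDerivAt_const (0:ℝ) ((Real.sqrt d)⁻¹ • w0)).congr_of_eventuallyEq heq
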